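/- Suppose C : {0,1}^n → ({0,1}^ℓ)^m is a (1, c, ε)-quantum smooth code using b bits, let u = Σ_{i=0}^{b} binom(ℓ, i), assume 2^{b+1} ≤ cu, and let N be a positive integer with N ≥ cu/2^{b+1}. Then for every i ∈ [n] there exists a two-outcome POVM (E_i^0, E_i^1) on (ℂ^m ⊗ ℂ^{2^ℓ})^{⊗N} such that for every x ∈ {0,1}^n, ⟨U(x)^{⊗N}, E_i^{x_i} U(x)^{⊗N}⟩ ≥ 1/2 + ε/2. (That is, the N-fold tensor power of U(x) is a quantum random access code for x with recovery probability at least 1/2 + ε/2.) -/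

import Mathlib

open ComplexOrder Matrix

/-- A quantum decoding tuple `(j0, j1, S0, S1)`: the two query positions and the two
sets of answer bits used. -/
structure QTuple (m ℓ : ℕ) where
  j0 : Fin m
  j1 : Fin m
  S0 : Finset (Fin ℓ)
  S1 : Finset (Fin ℓ)
deriving DecidableEq

/-- Quantum decoding tuples form a finite type. -/
def QTuple.equivProd (m ℓ : ℕ) :
    (Fin m × Fin m × Finset (Fin ℓ) × Finset (Fin ℓ)) ≃ QTuple m ℓ where
  toFun p := ⟨p.1, p.2.1, p.2.2.1, p.2.2.2⟩
  invFun ω := ⟨ω.j0, ω.j1, ω.S0, ω.S1⟩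
  left_inv _ := rfl
  right_inv _ := rfl

instance (m ℓ : ℕ) : Fintype (QTuple m ℓ) :=
  Fintype.ofEquiv _ (QTuple.equivProd m ℓ)

/-- `χ T a = (-1)^{T · a}`, the sign given by the inner product mod 2 of the
characteristic vector of `T` with the bit string `a`. -/
noncomputable def chi {ℓ : ℕ} (T : Finset (Fin ℓ)) (a : Fin ℓ → Bool) : ℂ :=
  (-1) ^ (T.filter fun k => a k = true).card

/-- The state resulting from the quantum query
`Q = (1/√2)(|j0⟩ ⊗ 2^{-b/2} Σ_{T ⊆ S0} (-1)^{T·y_{j0}} |T⟩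
          + |j1⟩ ⊗ 2^{-b/2} Σ_{T ⊆ S1} (-1)^{T·y_{j1}} |T⟩)`
to the string `y : ({0,1}^ℓ)^m`, as a vector in `ℂ^m ⊗ ℂ^{2^ℓ}` (indexed by the
standard basis `Fin m × Finset (Fin ℓ)`). -/
noncomputable def Qvec {m ℓ : ℕ} (b : ℕ) (j0 j1 : Fin m) (S0 S1 : Finset (Fin ℓ))
    (y : Fin m → Fin ℓ → Bool) : Fin m × Finset (Fin ℓ) → ℂ :=
  fun p =>
    ((1 / (Real.sqrt 2 * Real.sqrt (2 ^ b)) : ℝ) : ℂ) *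
      ((if p.1 = j0 ∧ p.2 ⊆ S0 then chi p.2 (y j0) else 0) +
       (if p.1 = j1 ∧ p.2 ⊆ S1 then chi p.2 (y j1) else 0))

/-- `D` (a distribution over quantum decoding tuples) together with the POVMs `E`
witnesses that `C` is a `(1, c, ε)`-quantum smooth code using `b` bits at index `i`. -/
def IsQSCDecoder {n m ℓ : ℕ} (b : ℕ) (c ε : ℝ)
    (C : (Fin n → Bool) → Fin m → Fin ℓ → Bool) (i : Fin n)
    (D : QTuple m ℓ → ℝ)
    (E : QTuple m ℓ → Bool →
      Matrix (Fin m × Finset (Fin ℓ)) (Fin m × Finset (Fin ℓ)) ℂ) : Prop :=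
  (∀ ω, 0 ≤ D ω) ∧ (∑ ω, D ω = 1) ∧
  (∀ ω, D ω ≠ 0 → ω.j0 ≠ ω.j1 ∧ ω.S0.card = b ∧ ω.S1.card = b ∧
    (E ω false).PosSemidef ∧ (E ω true).PosSemidef ∧ E ω false + E ω true = 1) ∧
  (∀ x, 1 / 2 + ε ≤
    ∑ ω, D ω *
      (star (Qvec b ω.j0 ω.j1 ω.S0 ω.S1 (C x)) ⬝ᵥ
        (E ω (x i) *ᵥ Qvec b ω.j0 ω.j1 ω.S0 ω.S1 (C x))).re) ∧
  (∀ j : Fin m,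
    ∑ ω ∈ Finset.univ.filter
      (fun ω : QTuple m ℓ => ω.j0 = j ∨ ω.j1 = j), D ω ≤ c / m)

/-- `C : {0,1}^n → ({0,1}^ℓ)^m` is a `(1, c, ε)`-quantum smooth code using `b` bits. -/
def IsQSC (n m ℓ b : ℕ) (c ε : ℝ)
    (C : (Fin n → Bool) → Fin m → Fin ℓ → Bool) : Prop :=
  ∀ i : Fin n, ∃ (D : QTuple m ℓ → ℝ)
    (E : QTuple m ℓ → Bool →
      Matrix (Fin m × Finset (Fin ℓ)) (Fin m × Finset (Fin ℓ)) ℂ),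
    IsQSCDecoder b c ε C i D E

/-- The state `U(x) = (1/√m) Σ_j |j⟩ ⊗ (1/√u) Σ_{|T| ≤ b} (-1)^{T·C(x)_j} |T⟩`
in `ℂ^m ⊗ ℂ^{2^ℓ}`, where `u = Σ_{i=0}^{b} binom(ℓ, i)`. -/
noncomputable def Uvec (m ℓ b : ℕ) (y : Fin m → Fin ℓ → Bool) :
    Fin m × Finset (Fin ℓ) → ℂ :=
  fun p =>
    if p.2.card ≤ b then
      ((1 / (Real.sqrt m *
        Real.sqrt (∑ i ∈ Finset.range (b + 1), (ℓ.choose i : ℝ))) : ℝ) : ℂ) *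
        chi p.2 (y p.1)
    else 0

/-- The `N`-fold tensor power `U(x)^{⊗N}`, as a vector indexed by the standard basis
`Fin N → (Fin m × Finset (Fin ℓ))` of `(ℂ^m ⊗ ℂ^{2^ℓ})^{⊗N}`. -/
noncomputable def UvecN (m ℓ b N : ℕ) (y : Fin m → Fin ℓ → Bool) :
    (Fin N → Fin m × Finset (Fin ℓ)) → ℂ :=
  fun v => ∏ k, Uvec m ℓ b y (v k)

/-! ### Auxiliary machinery for the proof of `stmt10` -/

namespace SAux

open Finset

/-! #### chi basics -/

lemma star_chi {ℓ : ℕ} (T : Finset (Fin ℓ)) (a : Fin ℓ → Bool) :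
    star (chi T a) = chi T a := by
  unfold chi
  rw [star_pow, star_neg, star_one]

lemma chi_mul_self {ℓ : ℕ} (T : Finset (Fin ℓ)) (a : Fin ℓ → Bool) :
    chi T a * chi T a = 1 := by
  unfold chi
  rw [← pow_add, ← two_mul, pow_mul]
  norm_num

/-! #### Generic Kronecker power machinery -/

variable {N : ℕ} {ι : Type*} [Fintype ι] [DecidableEq ι]

/-- Kronecker (tensor) product of a family of matrices. -/
noncomputable def kron (A : Fin N → Matrix ι ι ℂ) :
    Matrix (Fin N → ι) (Fin N → ι) ℂ :=
  Matrix.of fun v w => ∏ k, A k (v k) (w k)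

lemma kron_apply (A : Fin N → Matrix ι ι ℂ) (v w : Fin N → ι) :
    kron A v w = ∏ k, A k (v k) (w k) := rfl

/-- Product vector. -/
noncomputable def pv (f : Fin N → ι → ℂ) : (Fin N → ι) → ℂ :=
  fun v => ∏ k, f k (v k)

lemma kron_mul (A B : Fin N → Matrix ι ι ℂ) :
    kron (fun k => A k * B k) = kron A * kron B := by
  ext v w
  simp only [kron_apply, Matrix.mul_apply, Finset.prod_univ_sum, Fintype.piFinset_univ,
    Finset.prod_mul_distrib]

lemma kron_conjTranspose (A : Fin N → Matrix ι ι ℂ) :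
    kron (fun k => (A k)ᴴ) = (kron A)ᴴ := by
  ext v w
  simp only [kron_apply, Matrix.conjTranspose_apply, star_prod]

lemma kron_one : kron (fun _ : Fin N => (1 : Matrix ι ι ℂ)) = 1 := by
  ext v w
  by_cases h : v = w
  · subst h
    simp [kron_apply, Matrix.one_apply]
  · obtain ⟨k, hk⟩ := Function.ne_iff.mp h
    rw [kron_apply, Matrix.one_apply_ne h, Finset.prod_eq_zero (Finset.mem_univ k)]
    exact Matrix.one_apply_ne hk

lemma kron_posSemidef {A : Fin N → Matrix ι ι ℂ} (hA : ∀ k, (A k).PosSemidef) :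
    (kron A).PosSemidef := by
  choose B hB using fun k => (by
    open scoped MatrixOrder Matrix.Norms.L2Operator in
    exact CStarAlgebra.nonneg_iff_eq_star_mul_self.mp (hA k).nonneg :
      ∃ B : Matrix ι ι ℂ, A k = (B)ᴴ * B)
  rw [show A = fun k => (B k)ᴴ * B k from funext hB, kron_mul, kron_conjTranspose]
  exact Matrix.posSemidef_conjTranspose_mul_self _

lemma kron_update_apply (A : Fin N → Matrix ι ι ℂ) (k0 : Fin N) (Z : Matrix ι ι ℂ)
    (v w : Fin N → ι) :
    kron (Function.update A k0 Z) v w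
      = Z (v k0) (w k0) * ∏ k ∈ Finset.univ.erase k0, A k (v k) (w k) := by
  rw [kron_apply, ← Finset.mul_prod_erase Finset.univ _ (Finset.mem_univ k0),
    Function.update_self]
  congr 1
  refine Finset.prod_congr rfl fun k hk => ?_
  rw [Function.update_of_ne (Finset.ne_of_mem_erase hk)]

lemma kron_update_add (A : Fin N → Matrix ι ι ℂ) (k0 : Fin N) (X Y : Matrix ι ι ℂ) :
    kron (Function.update A k0 (X + Y))
      = kron (Function.update A k0 X) + kron (Function.update A k0 Y) := by
  ext v w
  simp [kron_update_apply, Matrix.add_apply, add_mul]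

lemma kron_mulVec (A : Fin N → Matrix ι ι ℂ) (f : Fin N → ι → ℂ) :
    kron A *ᵥ pv f = pv fun k => A k *ᵥ f k := by
  funext v
  simp only [Matrix.mulVec, dotProduct, pv, kron_apply, ← Finset.prod_mul_distrib]
  rw [Finset.prod_univ_sum, Fintype.piFinset_univ]

lemma pv_dot (f g : Fin N → ι → ℂ) :
    star (pv f) ⬝ᵥ pv g = ∏ k, star (f k) ⬝ᵥ g k := by
  simp only [dotProduct, pv, Pi.star_apply, star_prod, ← Finset.prod_mul_distrib]
  rw [Finset.prod_univ_sum, Fintype.piFinset_univ]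

lemma sum_mulVec {α : Type*} {s : Finset α} (A : α → Matrix ι ι ℂ) (v : ι → ℂ) :
    (∑ x ∈ s, A x) *ᵥ v = ∑ x ∈ s, A x *ᵥ v := by
  funext j
  simp only [Matrix.mulVec, dotProduct, Finset.sum_apply, Matrix.sum_apply,
    Finset.sum_mul]
  exact Finset.sum_comm

lemma dotProduct_sum {α : Type*} {s : Finset α} (v : ι → ℂ) (w : α → ι → ℂ) :
    v ⬝ᵥ (∑ x ∈ s, w x) = ∑ x ∈ s, v ⬝ᵥ w x := by
  simp only [dotProduct, Finset.sum_apply, Finset.mul_sum]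
  exact Finset.sum_comm

lemma psd_ofReal_smul {M : Matrix ι ι ℂ} (hM : M.PosSemidef) {a : ℝ} (ha : 0 ≤ a) :
    (((a : ℝ) : ℂ) • M).PosSemidef := by
  constructor
  · unfold Matrix.IsHermitian
    rw [Matrix.conjTranspose_smul, hM.1.eq]
    congr 1
    exact Complex.conj_ofReal a
  · exact (hM.smul (Complex.zero_le_real.mpr ha)).2

lemma hermitian_dot_mulVec (P : Matrix ι ι ℂ) (hP : Pᴴ = P) (v w : ι → ℂ) :
    star v ⬝ᵥ (P *ᵥ w) = star (P *ᵥ v) ⬝ᵥ w := by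
  rw [Matrix.dotProduct_mulVec, Matrix.star_mulVec, hP]

/-! #### Concrete single-copy objects -/

variable {m ℓ : ℕ}

/-- The set of basis vectors supporting the query state of a tuple. -/
def indSet (ω : QTuple m ℓ) (p : Fin m × Finset (Fin ℓ)) : Prop :=
  (p.1 = ω.j0 ∧ p.2 ⊆ ω.S0) ∨ (p.1 = ω.j1 ∧ p.2 ⊆ ω.S1)

instance (ω : QTuple m ℓ) (p : Fin m × Finset (Fin ℓ)) : Decidable (indSet ω p) := by
  unfold indSet; infer_instance

/-- Projection on the support of the query state of a tuple. -/
noncomputable def Pmat (ω : QTuple m ℓ) :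
    Matrix (Fin m × Finset (Fin ℓ)) (Fin m × Finset (Fin ℓ)) ℂ :=
  Matrix.diagonal fun p => if indSet ω p then 1 else 0

lemma Pmat_herm (ω : QTuple m ℓ) : (Pmat ω)ᴴ = Pmat ω := by
  ext p q
  rw [Matrix.conjTranspose_apply]
  unfold Pmat
  by_cases h : p = q
  · subst h
    rw [Matrix.diagonal_apply_eq]
    split_ifs <;> simp
  · rw [Matrix.diagonal_apply_ne _ h, Matrix.diagonal_apply_ne' _ h, star_zero]

lemma Pmat_mul_self (ω : QTuple m ℓ) : Pmat ω * Pmat ω = Pmat ω := by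
  unfold Pmat
  rw [Matrix.diagonal_mul_diagonal]
  refine congrArg Matrix.diagonal (funext fun p => ?_)
  split_ifs <;> simp

/-- The real normalization `u` as a real number. -/
noncomputable def uR (ℓ b : ℕ) : ℝ := ∑ i ∈ Finset.range (b + 1), (ℓ.choose i : ℝ)

noncomputable def rU (m ℓ b : ℕ) : ℝ := 1 / (Real.sqrt m * Real.sqrt (uR ℓ b))

noncomputable def sQ (b : ℕ) : ℝ := 1 / (Real.sqrt 2 * Real.sqrt (2 ^ b))

noncomputable def alphaR (m ℓ b : ℕ) : ℝ :=
  (Real.sqrt 2 * Real.sqrt (2 ^ b)) / (Real.sqrt m * Real.sqrt (uR ℓ b))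

lemma uR_pos (ℓ b : ℕ) : 0 < uR ℓ b := by
  have h1 : ((ℓ.choose 0 : ℕ) : ℝ) ≤ uR ℓ b := by
    apply Finset.single_le_sum (f := fun i => ((ℓ.choose i : ℕ) : ℝ))
    · intro i _
      positivity
    · simp
  simpa using lt_of_lt_of_le (by norm_num) h1

lemma alphaR_mul_sQ (m ℓ b : ℕ) : alphaR m ℓ b * sQ b = rU m ℓ b := by
  unfold alphaR sQ rU
  have h2 : (0:ℝ) < Real.sqrt 2 * Real.sqrt (2 ^ b) := by positivity
  rw [div_mul_div_comm, mul_one, mul_comm (Real.sqrt m * Real.sqrt (uR ℓ b)),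
    ← div_div, div_self h2.ne']

lemma alphaR_sq {m : ℕ} (hm : 0 < m) (ℓ b : ℕ) :
    alphaR m ℓ b ^ 2 = 2 * 2 ^ b / (m * uR ℓ b) := by
  unfold alphaR
  have h1 : (0:ℝ) < m := by exact_mod_cast hm
  have h2 := uR_pos ℓ b
  rw [div_pow, mul_pow, mul_pow, Real.sq_sqrt (by norm_num : (0:ℝ) ≤ 2),
    Real.sq_sqrt (by positivity : (0:ℝ) ≤ (2:ℝ) ^ b),
    Real.sq_sqrt h1.le, Real.sq_sqrt h2.le]

lemma rU_sq {m : ℕ} (hm : 0 < m) (ℓ b : ℕ) :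
    rU m ℓ b ^ 2 = 1 / (m * uR ℓ b) := by
  unfold rU
  have h1 : (0:ℝ) < m := by exact_mod_cast hm
  have h2 := uR_pos ℓ b
  rw [div_pow, mul_pow, Real.sq_sqrt h1.le, Real.sq_sqrt h2.le, one_pow]

/-! #### Counting lemmas -/

lemma countT (ℓ b : ℕ) :
    (Finset.univ.filter fun T : Finset (Fin ℓ) => T.card ≤ b).card
      = ∑ i ∈ Finset.range (b + 1), ℓ.choose i := by
  rw [Finset.card_eq_sum_card_fiberwise (f := Finset.card) (t := Finset.range (b + 1))
    (fun T hT => by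
      simp only [Finset.mem_coe, Finset.mem_range, Nat.lt_succ_iff]
      exact (Finset.mem_filter.mp (Finset.mem_coe.mp hT)).2)]
  refine Finset.sum_congr rfl fun i hi => ?_
  rw [Finset.filter_filter]
  have hi' : i ≤ b := Nat.lt_succ_iff.mp (Finset.mem_range.mp hi)
  have : (Finset.univ.filter fun T : Finset (Fin ℓ) => T.card ≤ b ∧ T.card = i)
      = Finset.powersetCard i (Finset.univ : Finset (Fin ℓ)) := by
    ext T
    simp only [Finset.mem_filter, Finset.mem_univ, true_and,
      Finset.mem_powersetCard_univ]
    constructor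
    · exact fun h => h.2
    · exact fun h => ⟨h ▸ hi', h⟩
  rw [this, Finset.card_powersetCard, Finset.card_univ, Fintype.card_fin]

lemma countIdx (m ℓ b : ℕ) :
    (Finset.univ.filter fun p : Fin m × Finset (Fin ℓ) => p.2.card ≤ b).card
      = m * ∑ i ∈ Finset.range (b + 1), ℓ.choose i := by
  have : (Finset.univ.filter fun p : Fin m × Finset (Fin ℓ) => p.2.card ≤ b)
      = (Finset.univ : Finset (Fin m)) ×ˢ
        (Finset.univ.filter fun T : Finset (Fin ℓ) => T.card ≤ b) := by
    ext p
    simp [Finset.mem_product]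
  rw [this, Finset.card_product, Finset.card_univ, Fintype.card_fin, countT]

lemma countPair {m ℓ : ℕ} (j0 : Fin m) (S0 : Finset (Fin ℓ)) :
    (Finset.univ.filter fun p : Fin m × Finset (Fin ℓ) => p.1 = j0 ∧ p.2 ⊆ S0).card
      = 2 ^ S0.card := by
  have : (Finset.univ.filter fun p : Fin m × Finset (Fin ℓ) => p.1 = j0 ∧ p.2 ⊆ S0)
      = {j0} ×ˢ S0.powerset := by
    ext p
    simp only [Finset.mem_filter, Finset.mem_univ, true_and, Finset.mem_product,
      Finset.mem_singleton, Finset.mem_powerset]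
  rw [this, Finset.card_product, Finset.card_singleton, Finset.card_powerset, one_mul]

/-! #### Norm computations -/

lemma Unorm {m : ℕ} (hm : 0 < m) (ℓ b : ℕ) (y : Fin m → Fin ℓ → Bool) :
    star (Uvec m ℓ b y) ⬝ᵥ Uvec m ℓ b y = 1 := by
  have hUf : Uvec m ℓ b y
      = fun p => if p.2.card ≤ b then ((rU m ℓ b : ℝ) : ℂ) * chi p.2 (y p.1) else 0 := by
    funext p
    unfold Uvec rU uR
    rfl
  have hterm : ∀ p : Fin m × Finset (Fin ℓ),
      star (Uvec m ℓ b y p) * Uvec m ℓ b y p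
        = if p.2.card ≤ b then (((rU m ℓ b ^ 2 : ℝ) : ℂ)) else 0 := by
    intro p
    simp only [hUf]
    split_ifs with h
    · rw [star_mul', star_chi, RCLike.star_def, Complex.conj_ofReal,
        mul_mul_mul_comm, chi_mul_self, mul_one]
      push_cast
      ring
    · simp
  have : star (Uvec m ℓ b y) ⬝ᵥ Uvec m ℓ b y
      = ∑ p : Fin m × Finset (Fin ℓ),
          if p.2.card ≤ b then (((rU m ℓ b ^ 2 : ℝ) : ℂ)) else 0 := by
    simp only [dotProduct, Pi.star_apply]
    exact Finset.sum_congr rfl fun p _ => hterm p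
  rw [this, Finset.sum_ite, Finset.sum_const, Finset.sum_const_zero, add_zero,
    countIdx m ℓ b, nsmul_eq_mul, rU_sq hm]
  have hmu : ((m * ∑ i ∈ Finset.range (b + 1), ℓ.choose i : ℕ) : ℝ)
      = m * uR ℓ b := by
    unfold uR
    push_cast
    ring
  have hpos : (0:ℝ) < m * uR ℓ b := by
    have h1 : (0:ℝ) < m := by exact_mod_cast hm
    exact mul_pos h1 (uR_pos ℓ b)
  rw [show ((m * ∑ i ∈ Finset.range (b + 1), ℓ.choose i : ℕ) : ℂ)
      = (((m * uR ℓ b : ℝ)) : ℂ) by exact_mod_cast congrArg Complex.ofReal hmu,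
    ← Complex.ofReal_mul]
  rw [show (m * uR ℓ b) * (1 / (m * uR ℓ b)) = 1 by rw [mul_one_div_cancel hpos.ne']]
  norm_num

lemma Qnorm {m ℓ b : ℕ} {j0 j1 : Fin m} {S0 S1 : Finset (Fin ℓ)}
    (hj : j0 ≠ j1) (h0 : S0.card = b) (h1 : S1.card = b) (y : Fin m → Fin ℓ → Bool) :
    star (Qvec b j0 j1 S0 S1 y) ⬝ᵥ Qvec b j0 j1 S0 S1 y = 1 := by
  have hterm : ∀ p : Fin m × Finset (Fin ℓ),
      star (Qvec b j0 j1 S0 S1 y p) * Qvec b j0 j1 S0 S1 y p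
        = ((sQ b ^ 2 : ℝ) : ℂ) *
            ((if p.1 = j0 ∧ p.2 ⊆ S0 then 1 else 0) +
             (if p.1 = j1 ∧ p.2 ⊆ S1 then 1 else 0)) := by
    intro p
    unfold Qvec
    have hs : ((1 / (Real.sqrt 2 * Real.sqrt (2 ^ b)) : ℝ) : ℂ) = ((sQ b : ℝ) : ℂ) := by
      unfold sQ; norm_num
    rw [hs]
    split_ifs with hc0 hc1 hc1
    · exact absurd (hc0.1.symm.trans hc1.1) hj
    · rw [add_zero, add_zero, star_mul', star_chi, RCLike.star_def, Complex.conj_ofReal,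
        mul_mul_mul_comm, chi_mul_self, mul_one]
      push_cast; ring
    · rw [zero_add, zero_add, star_mul', star_chi, RCLike.star_def, Complex.conj_ofReal,
        mul_mul_mul_comm, chi_mul_self, mul_one]
      push_cast; ring
    · simp
  have hsum : star (Qvec b j0 j1 S0 S1 y) ⬝ᵥ Qvec b j0 j1 S0 S1 y
      = ((sQ b ^ 2 : ℝ) : ℂ) *
          ((∑ p : Fin m × Finset (Fin ℓ), if p.1 = j0 ∧ p.2 ⊆ S0 then 1 else 0) +
           (∑ p : Fin m × Finset (Fin ℓ), if p.1 = j1 ∧ p.2 ⊆ S1 then 1 else 0)) := by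
    simp only [dotProduct, Pi.star_apply]
    rw [← Finset.sum_add_distrib, Finset.mul_sum]
    exact Finset.sum_congr rfl fun p _ => by rw [hterm p, mul_add]
  have hc0 : (∑ p : Fin m × Finset (Fin ℓ), if p.1 = j0 ∧ p.2 ⊆ S0 then (1:ℂ) else 0)
      = 2 ^ b := by
    rw [Finset.sum_ite, Finset.sum_const, Finset.sum_const_zero, add_zero,
      countPair j0 S0, h0, nsmul_eq_mul, mul_one]
    push_cast; ring
  have hc1 : (∑ p : Fin m × Finset (Fin ℓ), if p.1 = j1 ∧ p.2 ⊆ S1 then (1:ℂ) else 0)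
      = 2 ^ b := by
    rw [Finset.sum_ite, Finset.sum_const, Finset.sum_const_zero, add_zero,
      countPair j1 S1, h1, nsmul_eq_mul, mul_one]
    push_cast; ring
  rw [hsum, hc0, hc1]
  have hsq : sQ b ^ 2 = 1 / (2 * 2 ^ b) := by
    unfold sQ
    rw [div_pow, mul_pow, Real.sq_sqrt (by norm_num : (0:ℝ) ≤ 2),
      Real.sq_sqrt (by positivity : (0:ℝ) ≤ (2:ℝ) ^ b), one_pow]
  rw [hsq]
  have : ((2:ℂ) ^ b + 2 ^ b) = ((2 * 2 ^ b : ℝ) : ℂ) := by push_cast; ring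
  rw [this, ← Complex.ofReal_mul]
  have h2 : (0:ℝ) < 2 * 2 ^ b := by positivity
  rw [show (1 / (2 * 2 ^ b) : ℝ) * (2 * 2 ^ b) = 1 by field_simp]
  norm_num

/-! #### The key projection identity -/

lemma Pmat_mulVec {m ℓ b : ℕ} (ω : QTuple m ℓ) (hj : ω.j0 ≠ ω.j1)
    (h0 : ω.S0.card = b) (h1 : ω.S1.card = b) (y : Fin m → Fin ℓ → Bool) :
    Pmat ω *ᵥ Uvec m ℓ b y
      = ((alphaR m ℓ b : ℝ) : ℂ) • Qvec b ω.j0 ω.j1 ω.S0 ω.S1 y := by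
  funext p
  rw [show Pmat ω *ᵥ Uvec m ℓ b y = Matrix.diagonal (fun p => if indSet ω p then (1:ℂ) else 0)
      *ᵥ Uvec m ℓ b y from rfl]
  rw [Matrix.mulVec_diagonal]
  have hrs : ((rU m ℓ b : ℝ) : ℂ) = ((alphaR m ℓ b : ℝ) : ℂ) * ((sQ b : ℝ) : ℂ) := by
    rw [← Complex.ofReal_mul, alphaR_mul_sQ]
  have hQs : ((1 / (Real.sqrt 2 * Real.sqrt (2 ^ b)) : ℝ) : ℂ) = ((sQ b : ℝ) : ℂ) := by
    unfold sQ; norm_num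
  have hUr : ((1 / (Real.sqrt m *
      Real.sqrt (∑ i ∈ Finset.range (b + 1), (ℓ.choose i : ℝ))) : ℝ) : ℂ)
      = ((rU m ℓ b : ℝ) : ℂ) := by
    unfold rU uR; norm_num
  simp only [Pi.smul_apply, smul_eq_mul]
  unfold Qvec
  rw [hQs]
  by_cases hc0 : p.1 = ω.j0 ∧ p.2 ⊆ ω.S0
  · have hind : indSet ω p := Or.inl hc0
    have hcard : p.2.card ≤ b := h0 ▸ Finset.card_le_card hc0.2
    have hc1 : ¬(p.1 = ω.j1 ∧ p.2 ⊆ ω.S1) := fun h => hj (hc0.1.symm.trans h.1)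
    rw [if_pos hind, if_pos hc0, if_neg hc1, one_mul]
    unfold Uvec
    rw [if_pos hcard, hUr, hrs, hc0.1]
    ring
  · by_cases hc1 : p.1 = ω.j1 ∧ p.2 ⊆ ω.S1
    · have hind : indSet ω p := Or.inr hc1
      have hcard : p.2.card ≤ b := h1 ▸ Finset.card_le_card hc1.2
      rw [if_pos hind, if_neg hc0, if_pos hc1, one_mul, zero_add]
      unfold Uvec
      rw [if_pos hcard, hUr, hrs, hc1.1]
      ring
    · have hind : ¬ indSet ω p := fun h => h.elim hc0 hc1
      rw [if_neg hind, if_neg hc0, if_neg hc1, zero_mul]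
      ring

/-! #### Dot products against the projections -/

lemma dot_P {m ℓ b : ℕ} (ω : QTuple m ℓ) (hj : ω.j0 ≠ ω.j1)
    (h0 : ω.S0.card = b) (h1 : ω.S1.card = b) (y : Fin m → Fin ℓ → Bool) :
    star (Uvec m ℓ b y) ⬝ᵥ (Pmat ω *ᵥ Uvec m ℓ b y)
      = ((alphaR m ℓ b ^ 2 : ℝ) : ℂ) := by
  conv_lhs => rw [← Pmat_mul_self ω, ← Matrix.mulVec_mulVec]
  rw [hermitian_dot_mulVec _ (Pmat_herm ω), Pmat_mulVec ω hj h0 h1]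
  rw [star_smul, smul_dotProduct, dotProduct_smul, Qnorm hj h0 h1]
  simp only [smul_eq_mul, mul_one, RCLike.star_def, Complex.conj_ofReal]
  push_cast; ring

lemma dot_PEP {m ℓ b : ℕ} (ω : QTuple m ℓ) (hj : ω.j0 ≠ ω.j1)
    (h0 : ω.S0.card = b) (h1 : ω.S1.card = b) (y : Fin m → Fin ℓ → Bool)
    (M : Matrix (Fin m × Finset (Fin ℓ)) (Fin m × Finset (Fin ℓ)) ℂ) :
    star (Uvec m ℓ b y) ⬝ᵥ ((Pmat ω * M * Pmat ω) *ᵥ Uvec m ℓ b y)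
      = ((alphaR m ℓ b ^ 2 : ℝ) : ℂ) *
          (star (Qvec b ω.j0 ω.j1 ω.S0 ω.S1 y) ⬝ᵥ
            (M *ᵥ Qvec b ω.j0 ω.j1 ω.S0 ω.S1 y)) := by
  rw [mul_assoc, ← Matrix.mulVec_mulVec, ← Matrix.mulVec_mulVec,
    hermitian_dot_mulVec _ (Pmat_herm ω), Pmat_mulVec ω hj h0 h1,
    Matrix.mulVec_smul, star_smul, smul_dotProduct, dotProduct_smul]
  simp only [smul_eq_mul, RCLike.star_def, Complex.conj_ofReal]
  push_cast; ring

/-! #### Decoder-level matrices -/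

variable {b : ℕ}

noncomputable def Mdiag (c : ℝ) (D : QTuple m ℓ → ℝ) (p : Fin m × Finset (Fin ℓ)) : ℝ :=
  ∑ ω, (m * D ω / c) * (if indSet ω p then 1 else 0)

noncomputable def Rm (c : ℝ) (D : QTuple m ℓ → ℝ) :
    Matrix (Fin m × Finset (Fin ℓ)) (Fin m × Finset (Fin ℓ)) ℂ :=
  Matrix.diagonal fun p => ((1 - Mdiag c D p : ℝ) : ℂ)

noncomputable def Gm (c : ℝ) (D : QTuple m ℓ → ℝ)
    (E : QTuple m ℓ → Bool →
      Matrix (Fin m × Finset (Fin ℓ)) (Fin m × Finset (Fin ℓ)) ℂ) (a : Bool) :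
    Matrix (Fin m × Finset (Fin ℓ)) (Fin m × Finset (Fin ℓ)) ℂ :=
  ∑ ω, ((m * D ω / c : ℝ) : ℂ) • (Pmat ω * E ω a * Pmat ω)

lemma Msum (c : ℝ) (D : QTuple m ℓ → ℝ) :
    (∑ ω : QTuple m ℓ, ((m * D ω / c : ℝ) : ℂ) • Pmat ω)
      = Matrix.diagonal fun p => ((Mdiag c D p : ℝ) : ℂ) := by
  ext p q
  rw [Matrix.sum_apply]
  by_cases hpq : p = q
  · subst hpq
    rw [Matrix.diagonal_apply_eq]
    unfold Mdiag
    rw [Complex.ofReal_sum]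
    refine Finset.sum_congr rfl fun ω _ => ?_
    simp only [Matrix.smul_apply, Pmat, Matrix.diagonal_apply_eq, smul_eq_mul]
    split_ifs <;> simp
  · rw [Matrix.diagonal_apply_ne _ hpq]
    refine Finset.sum_eq_zero fun ω _ => ?_
    simp [Pmat, Matrix.diagonal_apply_ne _ hpq]

lemma Rm_posSemidef {c : ℝ} {D : QTuple m ℓ → ℝ} (hm : 0 < m) (hc : 0 < c)
    (hD0 : ∀ ω, 0 ≤ D ω)
    (hsm : ∀ j : Fin m,
      ∑ ω ∈ Finset.univ.filter (fun ω : QTuple m ℓ => ω.j0 = j ∨ ω.j1 = j), D ω ≤ c / m) :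
    (Rm c D).PosSemidef := by
  unfold Rm
  rw [Matrix.posSemidef_diagonal_iff]
  intro p
  rw [Complex.zero_le_real]
  have h1 : Mdiag c D p
      = (m / c) * ∑ ω ∈ Finset.univ.filter (fun ω : QTuple m ℓ => indSet ω p), D ω := by
    unfold Mdiag
    rw [Finset.sum_filter, Finset.mul_sum]
    refine Finset.sum_congr rfl fun ω _ => ?_
    split_ifs with h
    · ring
    · ring
  have h2 : ∑ ω ∈ Finset.univ.filter (fun ω : QTuple m ℓ => indSet ω p), D ω
      ≤ ∑ ω ∈ Finset.univ.filter (fun ω : QTuple m ℓ => ω.j0 = p.1 ∨ ω.j1 = p.1), D ω := by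
    apply Finset.sum_le_sum_of_subset_of_nonneg
    · intro ω hω
      simp only [Finset.mem_filter, Finset.mem_univ, true_and] at *
      exact hω.imp (fun h => h.1.symm) (fun h => h.1.symm)
    · exact fun ω _ _ => hD0 ω
  have hm' : (0:ℝ) < m := by exact_mod_cast hm
  have key : Mdiag c D p ≤ 1 := by
    calc Mdiag c D p = (m / c) * _ := h1
      _ ≤ (m / c) * (c / m) :=
          mul_le_mul_of_nonneg_left (h2.trans (hsm p.1)) (by positivity)
      _ = 1 := by field_simp
  linarith

lemma Gm_posSemidef {c : ℝ} {D : QTuple m ℓ → ℝ}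
    {E : QTuple m ℓ → Bool →
      Matrix (Fin m × Finset (Fin ℓ)) (Fin m × Finset (Fin ℓ)) ℂ}
    (hc : 0 < c) (hD0 : ∀ ω, 0 ≤ D ω) {a : Bool}
    (hpsd : ∀ ω, D ω ≠ 0 → (E ω a).PosSemidef) :
    (Gm c D E a).PosSemidef := by
  unfold Gm
  refine Finset.sum_induction _ _ (fun A B hA hB => hA.add hB)
    Matrix.PosSemidef.zero (fun ω _ => ?_)
  by_cases hD : D ω = 0
  · have h0 : ((m * D ω / c : ℝ) : ℂ) = 0 := by rw [hD]; norm_num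
    rw [h0, zero_smul]
    exact Matrix.PosSemidef.zero
  · have h1 : (Pmat ω * E ω a * Pmat ω).PosSemidef := by
      have h2 := (hpsd ω hD).mul_mul_conjTranspose_same (Pmat ω)
      rwa [Pmat_herm] at h2
    exact psd_ofReal_smul h1
      (div_nonneg (mul_nonneg (Nat.cast_nonneg m) (hD0 ω)) hc.le)

lemma Gm_add {c : ℝ} {D : QTuple m ℓ → ℝ}
    {E : QTuple m ℓ → Bool →
      Matrix (Fin m × Finset (Fin ℓ)) (Fin m × Finset (Fin ℓ)) ℂ}
    (hsum1 : ∀ ω, D ω ≠ 0 → E ω false + E ω true = 1) :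
    Gm c D E false + Gm c D E true
      = Matrix.diagonal fun p => ((Mdiag c D p : ℝ) : ℂ) := by
  unfold Gm
  rw [← Finset.sum_add_distrib, ← Msum]
  refine Finset.sum_congr rfl fun ω _ => ?_
  by_cases hD : D ω = 0
  · have h0 : ((m * D ω / c : ℝ) : ℂ) = 0 := by rw [hD]; norm_num
    simp [h0]
  · rw [← smul_add]
    congr 1
    rw [← Matrix.add_mul, ← Matrix.mul_add, hsum1 ω hD, Matrix.mul_one, Pmat_mul_self]

lemma Rm_eq (c : ℝ) (D : QTuple m ℓ → ℝ) :
    Rm c D = 1 - Matrix.diagonal fun p => ((Mdiag c D p : ℝ) : ℂ) := by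
  unfold Rm
  ext p q
  by_cases hpq : p = q
  · subst hpq
    simp only [Matrix.diagonal_apply_eq, Matrix.sub_apply, Matrix.one_apply_eq]
    push_cast
    ring
  · simp only [Matrix.diagonal_apply_ne _ hpq, Matrix.sub_apply, Matrix.one_apply_ne hpq]
    ring

lemma dot_Mdiag {c : ℝ} {D : QTuple m ℓ → ℝ} (hDsum : ∑ ω : QTuple m ℓ, D ω = 1)
    (hsupp : ∀ ω : QTuple m ℓ, D ω ≠ 0 →
      ω.j0 ≠ ω.j1 ∧ ω.S0.card = b ∧ ω.S1.card = b)
    (y : Fin m → Fin ℓ → Bool) :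
    star (Uvec m ℓ b y) ⬝ᵥ
        ((Matrix.diagonal fun p => ((Mdiag c D p : ℝ) : ℂ)) *ᵥ Uvec m ℓ b y)
      = ((m / c * alphaR m ℓ b ^ 2 : ℝ) : ℂ) := by
  rw [← Msum, sum_mulVec, dotProduct_sum]
  have h1 : ∀ ω : QTuple m ℓ,
      star (Uvec m ℓ b y) ⬝ᵥ ((((m * D ω / c : ℝ) : ℂ) • Pmat ω) *ᵥ Uvec m ℓ b y)
        = ((m * D ω / c * alphaR m ℓ b ^ 2 : ℝ) : ℂ) := by
    intro ω
    rw [Matrix.smul_mulVec, dotProduct_smul, smul_eq_mul]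
    by_cases hD : D ω = 0
    · rw [hD]
      norm_num
    · obtain ⟨hj, h0, h1⟩ := hsupp ω hD
      rw [dot_P ω hj h0 h1]
      push_cast
      ring
  rw [Finset.sum_congr rfl fun ω _ => h1 ω, ← Complex.ofReal_sum]
  congr 1
  have h2 : ∑ ω : QTuple m ℓ, m * D ω / c * alphaR m ℓ b ^ 2
      = m / c * alphaR m ℓ b ^ 2 * ∑ ω : QTuple m ℓ, D ω := by
    rw [Finset.mul_sum]
    exact Finset.sum_congr rfl fun ω _ => by ring
  rw [h2, hDsum, mul_one]

lemma dot_G {c : ℝ} {D : QTuple m ℓ → ℝ}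
    {E : QTuple m ℓ → Bool →
      Matrix (Fin m × Finset (Fin ℓ)) (Fin m × Finset (Fin ℓ)) ℂ}
    (hsupp : ∀ ω : QTuple m ℓ, D ω ≠ 0 →
      ω.j0 ≠ ω.j1 ∧ ω.S0.card = b ∧ ω.S1.card = b)
    (y : Fin m → Fin ℓ → Bool) (a : Bool) :
    (star (Uvec m ℓ b y) ⬝ᵥ (Gm c D E a *ᵥ Uvec m ℓ b y)).re
      = ∑ ω : QTuple m ℓ, (m / c * alphaR m ℓ b ^ 2) *
          (D ω * (star (Qvec b ω.j0 ω.j1 ω.S0 ω.S1 y) ⬝ᵥ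
            (E ω a *ᵥ Qvec b ω.j0 ω.j1 ω.S0 ω.S1 y)).re) := by
  unfold Gm
  rw [sum_mulVec, dotProduct_sum, Complex.re_sum]
  refine Finset.sum_congr rfl fun ω _ => ?_
  rw [Matrix.smul_mulVec, dotProduct_smul, smul_eq_mul]
  by_cases hD : D ω = 0
  · simp [hD]
  · obtain ⟨hj, h0, h1⟩ := hsupp ω hD
    rw [dot_PEP ω hj h0 h1, ← mul_assoc, ← Complex.ofReal_mul, Complex.re_ofReal_mul]
    ring

end SAux

/-- if `C` is a `(1, c, ε)`-quantum smooth code using `b` bits,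
`u = Σ_{i=0}^{b} binom(ℓ,i)`, `2^{b+1} ≤ c·u`, and `N ≥ cu/2^{b+1}` is a positive
integer, then for every `i` there is a two-outcome POVM on `(ℂ^m ⊗ ℂ^{2^ℓ})^{⊗N}`
recovering `x_i` from `U(x)^{⊗N}` with probability at least `1/2 + ε/2`; i.e. the
`N`-fold tensor power of `U(x)` is a quantum random access code for `x`. -/
theorem stmt10 (n m ℓ b : ℕ) (c ε : ℝ)
    (C : (Fin n → Bool) → Fin m → Fin ℓ → Bool)
    (h : IsQSC n m ℓ b c ε C)
    (u : ℕ) (hu : u = ∑ i ∈ Finset.range (b + 1), ℓ.choose i)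
    (hcu : (2 ^ (b + 1) : ℝ) ≤ c * u)
    (N : ℕ) (hN1 : 0 < N) (hN : c * u / 2 ^ (b + 1) ≤ (N : ℝ)) :
    ∀ i : Fin n,
      ∃ E : Bool → Matrix (Fin N → Fin m × Finset (Fin ℓ))
          (Fin N → Fin m × Finset (Fin ℓ)) ℂ,
        (E false).PosSemidef ∧ (E true).PosSemidef ∧ E false + E true = 1 ∧
        ∀ x : Fin n → Bool,
          1 / 2 + ε / 2 ≤
            (star (UvecN m ℓ b N (C x)) ⬝ᵥ
              (E (x i) *ᵥ UvecN m ℓ b N (C x))).re := by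
  classical
  intro i
  obtain ⟨D, E, hdec⟩ := h i
  obtain ⟨hD0, hDsum, hsupp, hcorrect, hsmooth⟩ := hdec
  -- positivity facts
  have hm : 0 < m := by
    rcases Nat.eq_zero_or_pos m with h0 | h0
    · exfalso
      subst h0
      haveI : IsEmpty (QTuple 0 ℓ) := ⟨fun ω => ω.j0.elim0⟩
      rw [Finset.univ_eq_empty, Finset.sum_empty] at hDsum
      exact one_ne_zero hDsum.symm
    · exact h0
  have hupos : 0 < u := by
    rw [hu]
    have h1 : 1 ≤ ∑ i ∈ Finset.range (b + 1), ℓ.choose i := by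
      calc 1 = ℓ.choose 0 := (Nat.choose_zero_right ℓ).symm
        _ ≤ _ := Finset.single_le_sum (f := fun i => ℓ.choose i)
            (fun _ _ => Nat.zero_le _) (Finset.mem_range.mpr (Nat.succ_pos b))
    omega
  have huR : SAux.uR ℓ b = (u : ℝ) := by
    rw [hu]
    unfold SAux.uR
    push_cast
    ring
  have hmR : (0:ℝ) < m := by exact_mod_cast hm
  have huRR : (0:ℝ) < (u : ℝ) := by exact_mod_cast hupos
  have hc : 0 < c := by
    by_contra hc'
    push_neg at hc'
    have h1 : c * u ≤ 0 := mul_nonpos_of_nonpos_of_nonneg hc' huRR.le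
    have h2 : (0:ℝ) < 2 ^ (b + 1) := by positivity
    linarith
  have hα2 : SAux.alphaR m ℓ b ^ 2 = 2 * 2 ^ b / (m * (u:ℝ)) := by
    rw [SAux.alphaR_sq hm, huR]
  set β : ℝ := m / c * SAux.alphaR m ℓ b ^ 2 with hβdef
  have hβval : β = 2 * 2 ^ b / (c * u) := by
    rw [hβdef, hα2]
    field_simp
  have h2b : (2:ℝ) ^ (b + 1) = 2 * 2 ^ b := by ring
  have hβpos : 0 < β := by rw [hβval]; positivity
  have hβ1 : β ≤ 1 := by
    rw [hβval, div_le_one (by positivity)]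
    linarith [hcu]
  have hβN : 1 ≤ β * N := by
    have h1 : c * u / 2 ^ (b + 1) * β = 1 := by
      rw [hβval, h2b]
      field_simp
    calc (1:ℝ) = c * u / 2 ^ (b + 1) * β := h1.symm
      _ ≤ N * β := mul_le_mul_of_nonneg_right hN hβpos.le
      _ = β * N := mul_comm _ _
  rcases le_or_gt ε 0 with hεle | hεpos
  -- trivial measurement when ε ≤ 0
  · refine ⟨fun _ => ((1/2 : ℝ) : ℂ) • 1, SAux.psd_ofReal_smul Matrix.PosSemidef.one
      (by norm_num), SAux.psd_ofReal_smul Matrix.PosSemidef.one (by norm_num), ?_, ?_⟩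
    · rw [← add_smul]
      norm_num
    · intro x
      have hUN : star (UvecN m ℓ b N (C x)) ⬝ᵥ UvecN m ℓ b N (C x) = 1 := by
        have h0 : UvecN m ℓ b N (C x) = SAux.pv (fun _ : Fin N => Uvec m ℓ b (C x)) := rfl
        rw [h0, SAux.pv_dot]
        simp [SAux.Unorm hm ℓ b (C x)]
      rw [Matrix.smul_mulVec, Matrix.one_mulVec, dotProduct_smul, hUN]
      simp only [smul_eq_mul, mul_one, Complex.ofReal_re]
      linarith
  -- main construction
  · set RR : Matrix (Fin m × Finset (Fin ℓ)) (Fin m × Finset (Fin ℓ)) ℂ :=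
      SAux.Rm c D with hRRdef
    set G : Bool → Matrix (Fin m × Finset (Fin ℓ)) (Fin m × Finset (Fin ℓ)) ℂ :=
      SAux.Gm c D E with hGdef
    set rC : ℂ := ((1 - β : ℝ) : ℂ) with hrCdef
    -- support facts
    have hsupp3 : ∀ ω : QTuple m ℓ, D ω ≠ 0 →
        ω.j0 ≠ ω.j1 ∧ ω.S0.card = b ∧ ω.S1.card = b :=
      fun ω hD => ⟨(hsupp ω hD).1, (hsupp ω hD).2.1, (hsupp ω hD).2.2.1⟩
    have hsumE : ∀ ω : QTuple m ℓ, D ω ≠ 0 → E ω false + E ω true = 1 :=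
      fun ω hD => (hsupp ω hD).2.2.2.2.2
    have hpsdE : ∀ a : Bool, ∀ ω : QTuple m ℓ, D ω ≠ 0 → (E ω a).PosSemidef := by
      intro a ω hD
      cases a
      · exact (hsupp ω hD).2.2.2.1
      · exact (hsupp ω hD).2.2.2.2.1
    have hRpsd : RR.PosSemidef := SAux.Rm_posSemidef hm hc hD0 hsmooth
    have hGpsd : ∀ a, (G a).PosSemidef :=
      fun a => SAux.Gm_posSemidef hc hD0 (hpsdE a)
    have hGGR : G false + G true + RR = 1 := by
      rw [hGdef, hRRdef, SAux.Gm_add hsumE, SAux.Rm_eq]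
      abel
    -- the big measurement
    set Emat : Bool → Matrix (Fin N → Fin m × Finset (Fin ℓ))
        (Fin N → Fin m × Finset (Fin ℓ)) ℂ :=
      fun a => (∑ k : Fin N, SAux.kron (Function.update
          (fun k' : Fin N => if k' < k then RR else 1) k (G a)))
        + ((1/2 : ℝ) : ℂ) • SAux.kron (fun _ : Fin N => RR) with hEmatdef
    have hEpsd : ∀ a, (Emat a).PosSemidef := by
      intro a
      apply Matrix.PosSemidef.add
      · refine Finset.sum_induction _ _ (fun A B hA hB => hA.add hB)
          Matrix.PosSemidef.zero (fun k _ => ?_)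
        apply SAux.kron_posSemidef
        intro k'
        rcases eq_or_ne k' k with hkk | hkk
        · subst hkk
          rw [Function.update_self]
          exact hGpsd a
        · rw [Function.update_of_ne hkk]
          split_ifs
          · exact hRpsd
          · exact Matrix.PosSemidef.one
      · exact SAux.psd_ofReal_smul (SAux.kron_posSemidef fun _ => hRpsd) (by norm_num)
    -- telescoping families
    set Sf : ℕ → Matrix (Fin N → Fin m × Finset (Fin ℓ))
        (Fin N → Fin m × Finset (Fin ℓ)) ℂ :=
      fun j => SAux.kron (fun k' : Fin N => if (k' : ℕ) < j then RR else 1) with hSfdef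
    have hT1 : ∀ k : Fin N,
        SAux.kron (Function.update (fun k' : Fin N => if k' < k then RR else 1) k
          (1 : Matrix (Fin m × Finset (Fin ℓ)) (Fin m × Finset (Fin ℓ)) ℂ))
          = Sf (k : ℕ) := by
      intro k
      simp only [hSfdef]
      refine congrArg SAux.kron (funext fun k' => ?_)
      rcases eq_or_ne k' k with hkk | hkk
      · subst hkk
        rw [Function.update_self, if_neg (lt_irrefl _)]
      · rw [Function.update_of_ne hkk]
        simp only [Fin.lt_def]
    have hTR : ∀ k : Fin N,
        SAux.kron (Function.update (fun k' : Fin N => if k' < k then RR else 1) k RR)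
          = Sf ((k : ℕ) + 1) := by
      intro k
      simp only [hSfdef]
      refine congrArg SAux.kron (funext fun k' => ?_)
      rcases eq_or_ne k' k with hkk | hkk
      · subst hkk
        rw [Function.update_self, if_pos (Nat.lt_succ_self _)]
      · rw [Function.update_of_ne hkk]
        have hne : (k' : ℕ) ≠ (k : ℕ) := fun hh => hkk (Fin.ext hh)
        simp only [Fin.lt_def]
        split_ifs with h1 h2 <;> first | rfl | omega
    have hS0 : Sf 0 = 1 := by
      simp only [hSfdef]
      rw [show (fun k' : Fin N => if (k' : ℕ) < 0 then RR else 1)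
          = fun _ : Fin N =>
            (1 : Matrix (Fin m × Finset (Fin ℓ)) (Fin m × Finset (Fin ℓ)) ℂ)
        from funext fun k' => by simp]
      exact SAux.kron_one
    have hSN : Sf N = SAux.kron (fun _ : Fin N => RR) := by
      simp only [hSfdef]
      refine congrArg SAux.kron (funext fun k' => ?_)
      rw [if_pos k'.isLt]
    have hEsum : Emat false + Emat true = 1 := by
      simp only [hEmatdef]
      have hhalf : ((1/2 : ℝ) : ℂ) • SAux.kron (fun _ : Fin N => RR)
          + ((1/2 : ℝ) : ℂ) • SAux.kron (fun _ : Fin N => RR)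
          = SAux.kron (fun _ : Fin N => RR) := by
        rw [← add_smul]
        norm_num
      have hk1 : ∀ k : Fin N,
          SAux.kron (Function.update (fun k' : Fin N => if k' < k then RR else 1) k (G false))
          + SAux.kron (Function.update (fun k' : Fin N => if k' < k then RR else 1) k (G true))
          = Sf (k : ℕ) - Sf ((k : ℕ) + 1) := by
        intro k
        have h2 := SAux.kron_update_add
          (fun k' : Fin N => if k' < k then RR else 1) k (G false) (G true)
        have h3 := SAux.kron_update_add
          (fun k' : Fin N => if k' < k then RR else 1) k (G false + G true) RR
        rw [hGGR, hT1 k, h2, hTR k] at h3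
        exact eq_sub_of_add_eq h3.symm
      calc (∑ k : Fin N, SAux.kron (Function.update
              (fun k' : Fin N => if k' < k then RR else 1) k (G false)))
            + ((1/2 : ℝ) : ℂ) • SAux.kron (fun _ : Fin N => RR)
            + ((∑ k : Fin N, SAux.kron (Function.update
              (fun k' : Fin N => if k' < k then RR else 1) k (G true)))
            + ((1/2 : ℝ) : ℂ) • SAux.kron (fun _ : Fin N => RR))
          = (∑ k : Fin N, (SAux.kron (Function.update
              (fun k' : Fin N => if k' < k then RR else 1) k (G false))
              + SAux.kron (Function.update
              (fun k' : Fin N => if k' < k then RR else 1) k (G true))))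
            + (((1/2 : ℝ) : ℂ) • SAux.kron (fun _ : Fin N => RR)
              + ((1/2 : ℝ) : ℂ) • SAux.kron (fun _ : Fin N => RR)) := by
            rw [Finset.sum_add_distrib]
            abel
        _ = (∑ k : Fin N, (Sf (k : ℕ) - Sf ((k : ℕ) + 1)))
            + SAux.kron (fun _ : Fin N => RR) := by
            rw [hhalf, Finset.sum_congr rfl fun k _ => hk1 k]
        _ = (Sf 0 - Sf N) + SAux.kron (fun _ : Fin N => RR) := by
            rw [Fin.sum_univ_eq_sum_range (fun j => Sf j - Sf (j + 1)) N,
              Finset.sum_range_sub']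
        _ = 1 := by
            rw [hS0, hSN]
            abel
    refine ⟨Emat, hEpsd false, hEpsd true, hEsum, ?_⟩
    intro x
    -- single-copy dot products
    have hUnorm1 : star (Uvec m ℓ b (C x)) ⬝ᵥ Uvec m ℓ b (C x) = 1 :=
      SAux.Unorm hm ℓ b (C x)
    have hdotOne : star (Uvec m ℓ b (C x)) ⬝ᵥ
        ((1 : Matrix (Fin m × Finset (Fin ℓ)) (Fin m × Finset (Fin ℓ)) ℂ)
          *ᵥ Uvec m ℓ b (C x)) = 1 := by
      rw [Matrix.one_mulVec]
      exact hUnorm1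
    have hdotR : star (Uvec m ℓ b (C x)) ⬝ᵥ (RR *ᵥ Uvec m ℓ b (C x)) = rC := by
      rw [hRRdef, SAux.Rm_eq, Matrix.sub_mulVec, dotProduct_sub,
        Matrix.one_mulVec, hUnorm1, SAux.dot_Mdiag hDsum hsupp3 (C x), hrCdef]
      rw [← hβdef]
      push_cast
      ring
    set g : ℂ := star (Uvec m ℓ b (C x)) ⬝ᵥ (G (x i) *ᵥ Uvec m ℓ b (C x)) with hgdef
    have hgre : β * (1/2 + ε) ≤ g.re := by
      rw [hgdef, hGdef]
      rw [SAux.dot_G hsupp3 (C x) (x i)]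
      have h1 : ∑ ω : QTuple m ℓ, (m / c * SAux.alphaR m ℓ b ^ 2) *
          (D ω * (star (Qvec b ω.j0 ω.j1 ω.S0 ω.S1 (C x)) ⬝ᵥ
            (E ω (x i) *ᵥ Qvec b ω.j0 ω.j1 ω.S0 ω.S1 (C x))).re)
          = β * ∑ ω : QTuple m ℓ, D ω * (star (Qvec b ω.j0 ω.j1 ω.S0 ω.S1 (C x)) ⬝ᵥ
            (E ω (x i) *ᵥ Qvec b ω.j0 ω.j1 ω.S0 ω.S1 (C x))).re := by
        rw [Finset.mul_sum, hβdef]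
      rw [h1]
      exact mul_le_mul_of_nonneg_left (hcorrect x) hβpos.le
    have hUNpv : UvecN m ℓ b N (C x) = SAux.pv (fun _ : Fin N => Uvec m ℓ b (C x)) := rfl
    -- per-copy term
    have hslot : ∀ k : Fin N,
        star (UvecN m ℓ b N (C x)) ⬝ᵥ
          (SAux.kron (Function.update
            (fun k' : Fin N => if k' < k then RR else 1) k (G (x i)))
            *ᵥ UvecN m ℓ b N (C x))
          = rC ^ (k : ℕ) * g := by
      intro k
      rw [hUNpv, SAux.kron_mulVec, SAux.pv_dot]
      have hval : ∀ k' : Fin N,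
          star (Uvec m ℓ b (C x)) ⬝ᵥ
            ((Function.update (fun k'' : Fin N => if k'' < k then RR else 1) k
              (G (x i))) k' *ᵥ Uvec m ℓ b (C x))
            = if k' = k then g else if k' < k then rC else 1 := by
        intro k'
        rcases eq_or_ne k' k with hkk | hkk
        · subst hkk
          rw [Function.update_self, if_pos rfl, hgdef]
        · rw [Function.update_of_ne hkk, if_neg hkk]
          split_ifs with hlt
          · exact hdotR
          · exact hdotOne
      rw [Finset.prod_congr rfl fun k' _ => hval k']
      rw [← Finset.mul_prod_erase Finset.univ _ (Finset.mem_univ k), if_pos rfl]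
      have hprod : ∏ k' ∈ Finset.univ.erase k,
          (if k' = k then g else if k' < k then rC else 1) = rC ^ (k : ℕ) := by
        rw [Finset.prod_congr rfl fun k' hk' => by
          rw [if_neg (Finset.ne_of_mem_erase hk')]]
        rw [Finset.prod_ite (fun _ => rC) (fun _ => (1:ℂ))]
        rw [Finset.prod_const, Finset.prod_const_one, mul_one]
        congr 1
        have hset : (Finset.univ.erase k).filter (fun k' : Fin N => k' < k)
            = Finset.Iio k := by
          ext k'
          simp only [Finset.mem_filter, Finset.mem_erase, Finset.mem_univ, true_and,
            and_true, Finset.mem_Iio]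
          constructor
          · exact fun h => h.2
          · exact fun h => ⟨ne_of_lt h, h⟩
        rw [hset, Fin.card_Iio]
      rw [hprod]
      ring
    -- dot against the final kron
    have hK : star (UvecN m ℓ b N (C x)) ⬝ᵥ
        (SAux.kron (fun _ : Fin N => RR) *ᵥ UvecN m ℓ b N (C x)) = rC ^ N := by
      rw [hUNpv, SAux.kron_mulVec, SAux.pv_dot]
      rw [Finset.prod_congr rfl fun k _ => hdotR]
      rw [Finset.prod_const, Finset.card_univ, Fintype.card_fin]
    -- full value
    have hval2 : (star (UvecN m ℓ b N (C x)) ⬝ᵥ (Emat (x i) *ᵥ UvecN m ℓ b N (C x))).re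
        = (∑ j ∈ Finset.range N, (1 - β) ^ j) * g.re + 1/2 * (1 - β) ^ N := by
      simp only [hEmatdef]
      rw [Matrix.add_mulVec, dotProduct_add, SAux.sum_mulVec,
        SAux.dotProduct_sum, Matrix.smul_mulVec, dotProduct_smul, hK,
        Finset.sum_congr rfl fun k _ => hslot k]
      rw [Complex.add_re, Complex.re_sum]
      have hterm : ∀ k : Fin N, (rC ^ (k : ℕ) * g).re = (1 - β) ^ (k : ℕ) * g.re := by
        intro k
        rw [hrCdef, ← Complex.ofReal_pow, Complex.re_ofReal_mul]
      rw [Finset.sum_congr rfl fun k _ => hterm k,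
        Fin.sum_univ_eq_sum_range (fun j => (1 - β) ^ j * g.re) N, ← Finset.sum_mul]
      congr 1
      rw [smul_eq_mul, hrCdef, ← Complex.ofReal_pow, Complex.re_ofReal_mul,
        Complex.ofReal_re]
    rw [hval2]
    set S : ℝ := ∑ j ∈ Finset.range N, (1 - β) ^ j with hSdef
    have hr0 : (0:ℝ) ≤ 1 - β := by linarith
    have hSnn : 0 ≤ S := Finset.sum_nonneg fun j _ => pow_nonneg hr0 j
    have hSβ : S * β = 1 - (1 - β) ^ N := by
      have hgs := geom_sum_mul (1 - β) N
      rw [hSdef]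
      linear_combination -hgs
    have hρ : (1 - β) ^ N ≤ 1/2 := by
      have h1 : 1 - β ≤ Real.exp (-β) := by
        have := Real.add_one_le_exp (-β)
        linarith
      have h2 : (1 - β) ^ N ≤ Real.exp (-β) ^ N := pow_le_pow_left₀ hr0 h1 N
      have h3 : Real.exp (-β) ^ N = Real.exp (-(β * N)) := by
        rw [← Real.exp_nat_mul]
        ring_nf
      have h4 : Real.exp (-(β * N)) ≤ Real.exp (-1) :=
        Real.exp_le_exp.mpr (by linarith)
      have h5 : Real.exp (-1) ≤ 1/2 := by
        rw [Real.exp_neg]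
        have h6 : (2:ℝ) ≤ Real.exp 1 := by
          have := Real.add_one_le_exp 1
          linarith
        rw [inv_eq_one_div]
        exact one_div_le_one_div_of_le (by norm_num) h6
      calc (1 - β) ^ N ≤ Real.exp (-β) ^ N := h2
        _ = Real.exp (-(β * N)) := h3
        _ ≤ Real.exp (-1) := h4
        _ ≤ 1/2 := h5
    have hS1 : S * (β * (1/2 + ε)) ≤ S * g.re :=
      mul_le_mul_of_nonneg_left hgre hSnn
    have key2 : S * (β * (1/2 + ε))
        = 1/2 + ε - (1 - β) ^ N * (1/2) - (1 - β) ^ N * ε := by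
      rw [← mul_assoc, hSβ]
      ring
    have hint : 0 ≤ ε * (1/2 - (1 - β) ^ N) :=
      mul_nonneg hεpos.le (by linarith)
    nlinarith [hS1, key2, hint]
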